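/- arXiv:2004.12282 — 4 statements merged into one kernel-verified Lean document; each statement's English description precedes it below -/
import Mathlib

section
/- Let E be an m×n real matrix of rank r with SVD-partition U = [U₁ U₂], V = [V₁ V₂], S. Let A_xx be an m×n real matrix and A_xv an m×v real matrix. If the matrix U₂ᵀ·[A_xx·V₂ A_xv] (the horizontal concatenation of U₂ᵀA_xxV₂ and U₂ᵀA_xv) has full column rank, then the stacked matrix col{U₂ᵀ·A_xx, V₁ᵀ} has full column rank. -/
open Matrix

noncomputable section

/-- A real matrix has full column rank (FCR) iff its rank equals its number of columns. -/
def FCR {m n : Type*} [Fintype m] [Fintype n] (A : Matrix m n ℝ) : Prop :=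
  A.rank = Fintype.card n

/-- A real matrix has full row rank (FRR) iff its rank equals its number of rows. -/
def FRR {m n : Type*} [Fintype m] [Fintype n] (A : Matrix m n ℝ) : Prop :=
  A.rank = Fintype.card m

/-- `E` is an `m × n` real matrix of rank `r` with SVD-partition
`U = [U₁ U₂]`, `V = [V₁ V₂]`, `S`: the matrices `U = [U₁ U₂]` and `V = [V₁ V₂]` are
orthogonal, `S` is an `r × r` diagonal matrix with positive diagonal entries,
and `E = U₁ * S * V₁ᵀ`. -/
def IsSVDPartition {m n r : ℕ} (E : Matrix (Fin m) (Fin n) ℝ)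
    (U₁ : Matrix (Fin m) (Fin r) ℝ) (U₂ : Matrix (Fin m) (Fin (m - r)) ℝ)
    (V₁ : Matrix (Fin n) (Fin r) ℝ) (V₂ : Matrix (Fin n) (Fin (n - r)) ℝ)
    (S : Matrix (Fin r) (Fin r) ℝ) : Prop :=
  r ≤ m ∧ r ≤ n ∧
    (Matrix.fromCols U₁ U₂)ᵀ * Matrix.fromCols U₁ U₂ = 1 ∧
    (Matrix.fromCols V₁ V₂)ᵀ * Matrix.fromCols V₁ V₂ = 1 ∧
    (∃ d : Fin r → ℝ, (∀ i, 0 < d i) ∧ S = Matrix.diagonal d) ∧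
    E = U₁ * S * V₁ᵀ ∧ E.rank = r

lemma fcr_iff_mulVec {m n : Type*} [Fintype m] [Fintype n] (A : Matrix m n ℝ) :
    FCR A ↔ ∀ x, A.mulVec x = 0 → x = 0 := by
  have hrn := LinearMap.finrank_range_add_finrank_ker A.mulVecLin
  have hdim : Module.finrank ℝ (n → ℝ) = Fintype.card n := Module.finrank_fintype_fun_eq_card ℝ
  rw [FCR, Matrix.rank]
  constructor
  · intro hA x hx
    have hker : Module.finrank ℝ (LinearMap.ker A.mulVecLin) = 0 := by omega
    have : LinearMap.ker A.mulVecLin = ⊥ := Submodule.finrank_eq_zero.mp hker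
    have := LinearMap.ker_eq_bot.mp this
    exact this (by simpa [Matrix.mulVecLin_apply] using hx)
  · intro hA
    have hker : LinearMap.ker A.mulVecLin = ⊥ := by
      rw [LinearMap.ker_eq_bot']
      intro x hx
      exact hA x (by simpa [Matrix.mulVecLin_apply] using hx)
    rw [hker] at hrn
    simp only [finrank_bot, add_zero] at hrn
    rw [hrn, hdim]

/-- If `U₂ᵀ·[A_xx·V₂  A_xv]` has full column rank, then `col{U₂ᵀ·A_xx, V₁ᵀ}`
has full column rank. -/
theorem fcr_col_of_fcr_concat (m n r v : ℕ)
    (E : Matrix (Fin m) (Fin n) ℝ)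
    (U₁ : Matrix (Fin m) (Fin r) ℝ) (U₂ : Matrix (Fin m) (Fin (m - r)) ℝ)
    (V₁ : Matrix (Fin n) (Fin r) ℝ) (V₂ : Matrix (Fin n) (Fin (n - r)) ℝ)
    (S : Matrix (Fin r) (Fin r) ℝ)
    (hsvd : IsSVDPartition E U₁ U₂ V₁ V₂ S)
    (Axx : Matrix (Fin m) (Fin n) ℝ) (Axv : Matrix (Fin m) (Fin v) ℝ)
    (h : FCR (U₂ᵀ * Matrix.fromCols (Axx * V₂) Axv)) :
    FCR (Matrix.fromRows (U₂ᵀ * Axx) V₁ᵀ) := by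
  obtain ⟨hrm, hrn, hU, hV, _, _, _⟩ := hsvd
  rw [fcr_iff_mulVec] at h ⊢
  -- V V^T = 1
  have e : Fin n ≃ Fin r ⊕ Fin (n - r) :=
    (finCongr (by omega : n = r + (n - r))).trans finSumFinEquiv.symm
  have hVVt : V₁ * V₁ᵀ + V₂ * V₂ᵀ = 1 := by
    rw [Matrix.transpose_fromCols] at hV
    have := (Matrix.fromCols_mul_fromRows_eq_one_comm e V₁ V₂ V₁ᵀ V₂ᵀ).mpr hV
    rwa [Matrix.fromCols_mul_fromRows] at this
  intro x hx
  rw [Matrix.fromRows_mulVec] at hx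
  have hx1 : (U₂ᵀ * Axx).mulVec x = 0 := congrArg (fun f => f ∘ Sum.inl) hx
  have hx2 : V₁ᵀ.mulVec x = 0 := congrArg (fun f => f ∘ Sum.inr) hx
  set y := V₂ᵀ.mulVec x with hy
  have hxy : V₂.mulVec y = x := by
    have : (V₁ * V₁ᵀ + V₂ * V₂ᵀ).mulVec x = x := by rw [hVVt, Matrix.one_mulVec]
    rw [Matrix.add_mulVec, ← Matrix.mulVec_mulVec, ← Matrix.mulVec_mulVec, hx2,
      Matrix.mulVec_zero, zero_add] at this
    exact this
  have hz : (U₂ᵀ * Matrix.fromCols (Axx * V₂) Axv).mulVec (Sum.elim y 0) = 0 := by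
    rw [← Matrix.mulVec_mulVec, Matrix.fromCols_mulVec_sumElim, Matrix.mulVec_zero,
      add_zero, ← Matrix.mulVec_mulVec, hxy]
    simpa [Matrix.mulVec_mulVec] using hx1
  have := h _ hz
  have hy0 : y = 0 := by
    funext i
    exact congrFun this (Sum.inl i)
  rw [← hxy, hy0, Matrix.mulVec_zero]
end
end

section
/- Let V = [V₁ V₂] be an n×n real orthogonal matrix, where V₁ has r columns and V₂ has n−r columns, and let M be any p×n real matrix. Then M·V₂ has full column rank if and only if the stacked matrix col{M, V₁ᵀ} has full column rank. -/
open Matrix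

noncomputable section

lemma fcr_iff_inj {m n : Type*} [Fintype m] [Fintype n] (A : Matrix m n ℝ) :
    FCR A ↔ ∀ x : n → ℝ, A *ᵥ x = 0 → x = 0 := by
  have hrn := LinearMap.finrank_range_add_finrank_ker A.mulVecLin
  rw [Module.finrank_fintype_fun_eq_card] at hrn
  unfold FCR
  rw [Matrix.rank]
  constructor
  · intro h x hx
    have hk : Module.finrank ℝ (LinearMap.ker A.mulVecLin) = 0 := by omega
    have := Submodule.finrank_eq_zero (R := ℝ) (S := LinearMap.ker A.mulVecLin) |>.mp hk
    have hx' : x ∈ LinearMap.ker A.mulVecLin := by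
      simpa [LinearMap.mem_ker, Matrix.mulVecLin_apply] using hx
    rw [this] at hx'
    simpa using hx'
  · intro h
    have hk : LinearMap.ker A.mulVecLin = ⊥ := by
      rw [LinearMap.ker_eq_bot']
      intro x hx
      exact h x (by simpa [Matrix.mulVecLin_apply] using hx)
    rw [hk] at hrn
    simpa using hrn

/-- Let `V = [V₁ V₂]` be an `n × n` orthogonal matrix, `V₁` with `r` columns and
`V₂` with `n - r` columns, and `M` a `p × n` matrix. Then `M·V₂` has full column
rank iff `col{M, V₁ᵀ}` has full column rank. -/
theorem mul_fcr_iff_fromRows_fcr (n r p : ℕ) (hr : r ≤ n)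
    (V₁ : Matrix (Fin n) (Fin r) ℝ) (V₂ : Matrix (Fin n) (Fin (n - r)) ℝ)
    (hV : (Matrix.fromCols V₁ V₂)ᵀ * Matrix.fromCols V₁ V₂ = 1)
    (M : Matrix (Fin p) (Fin n) ℝ) :
    FCR (M * V₂) ↔ FCR (Matrix.fromRows M V₁ᵀ) := by
  rw [Matrix.transpose_fromCols, Matrix.fromRows_mul_fromCols] at hV
  -- extract blocks
  have h12 : V₁ᵀ * V₂ = 0 := by
    ext i j
    have := congrFun (congrFun hV (Sum.inl i)) (Sum.inr j)
    simpa [Matrix.fromBlocks, Matrix.one_apply] using this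
  have h22 : V₂ᵀ * V₂ = 1 := by
    ext i j
    have := congrFun (congrFun hV (Sum.inr i)) (Sum.inr j)
    simpa [Matrix.fromBlocks, Matrix.one_apply] using this
  -- V is square, so also V * Vᵀ = 1
  have e : Fin n ≃ Fin r ⊕ Fin (n - r) :=
    (finCongr (by omega : n = r + (n - r))).trans finSumFinEquiv.symm
  have hVVt : V₁ * V₁ᵀ + V₂ * V₂ᵀ = 1 := by
    have h1 : Matrix.fromRows V₁ᵀ V₂ᵀ * Matrix.fromCols V₁ V₂ = 1 := by
      rw [Matrix.fromRows_mul_fromCols]; exact hV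
    have h2 := (Matrix.fromCols_mul_fromRows_eq_one_comm e V₁ V₂ V₁ᵀ V₂ᵀ).mpr h1
    rwa [Matrix.fromCols_mul_fromRows] at h2
  rw [fcr_iff_inj, fcr_iff_inj]
  constructor
  · -- M*V₂ FCR → fromRows FCR
    intro h v hv
    rw [Matrix.fromRows_mulVec] at hv
    have hM : M *ᵥ v = 0 := by
      funext i; simpa using congrFun hv (Sum.inl i)
    have hV1 : V₁ᵀ *ᵥ v = 0 := by
      funext i; simpa using congrFun hv (Sum.inr i)
    have hv2 : v = V₂ *ᵥ (V₂ᵀ *ᵥ v) := by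
      have := congrArg (· *ᵥ v) hVVt
      simp only [Matrix.add_mulVec, Matrix.one_mulVec, ← Matrix.mulVec_mulVec] at this
      rw [hV1] at this
      simpa using this.symm
    have : (M * V₂) *ᵥ (V₂ᵀ *ᵥ v) = 0 := by
      rw [← Matrix.mulVec_mulVec, ← hv2, hM]
    have hz := h _ this
    rw [hv2, hz]
    simp
  · -- fromRows FCR → M*V₂ FCR
    intro h x hx
    have hMv : M *ᵥ (V₂ *ᵥ x) = 0 := by
      rwa [Matrix.mulVec_mulVec]
    have hV1v : V₁ᵀ *ᵥ (V₂ *ᵥ x) = 0 := by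
      rw [Matrix.mulVec_mulVec, h12]; simp
    have : Matrix.fromRows M V₁ᵀ *ᵥ (V₂ *ᵥ x) = 0 := by
      rw [Matrix.fromRows_mulVec, hMv, hV1v]
      funext i; cases i <;> simp
    have hz := h _ this
    have : V₂ᵀ *ᵥ (V₂ *ᵥ x) = 0 := by rw [hz]; simp
    rwa [Matrix.mulVec_mulVec, h22, Matrix.one_mulVec] at this
end
end

section
/- Let U = [U₁ U₂] be an m×m real orthogonal matrix, where U₁ has r columns and U₂ has m−r columns, and let M be any m×p real matrix. Then U₂ᵀ·M has full row rank if and only if the matrix [U₁ M] (horizontal concatenation of U₁ and M) has full row rank. -/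
open Matrix

noncomputable section

lemma frr_iff_vecMul {m n : Type*} [Fintype m] [Fintype n] (A : Matrix m n ℝ) :
    FRR A ↔ ∀ v : m → ℝ, v ᵥ* A = 0 → v = 0 := by
  have h1 : FRR A ↔ Aᵀ.rank = Fintype.card m := by
    unfold FRR; rw [Matrix.rank_transpose]
  rw [h1]
  have h2 : Aᵀ.rank = Fintype.card m ↔ LinearMap.ker Aᵀ.mulVecLin = ⊥ := by
    rw [Matrix.rank]
    have hr := LinearMap.finrank_range_add_finrank_ker Aᵀ.mulVecLin
    rw [Module.finrank_fintype_fun_eq_card] at hr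
    constructor
    · intro h
      have : Module.finrank ℝ (LinearMap.ker Aᵀ.mulVecLin) = 0 := by omega
      exact Submodule.finrank_eq_zero.mp this
    · intro h
      rw [h] at hr
      simpa using hr
  rw [h2, LinearMap.ker_eq_bot']
  constructor
  · intro h v hv
    exact h v (by simpa [Matrix.mulVecLin_apply, Matrix.mulVec_transpose] using hv)
  · intro h v hv
    exact h v (by simpa [Matrix.mulVecLin_apply, Matrix.mulVec_transpose] using hv)

/-- Let `U = [U₁ U₂]` be an `m × m` orthogonal matrix, `U₁` with `r` columns and
`U₂` with `m - r` columns, and `M` an `m × p` matrix. Then `U₂ᵀ·M` has full row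
rank iff `[U₁  M]` has full row rank. -/
theorem transpose_mul_frr_iff_fromColumns_frr (m r p : ℕ) (hr : r ≤ m)
    (U₁ : Matrix (Fin m) (Fin r) ℝ) (U₂ : Matrix (Fin m) (Fin (m - r)) ℝ)
    (hU : (Matrix.fromCols U₁ U₂)ᵀ * Matrix.fromCols U₁ U₂ = 1)
    (M : Matrix (Fin m) (Fin p) ℝ) :
    FRR (U₂ᵀ * M) ↔ FRR (Matrix.fromCols U₁ M) := by
  -- block structure of hU
  rw [Matrix.transpose_fromCols, Matrix.fromRows_mul_fromCols] at hU
  have hblocks := hU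
  rw [show (1 : Matrix (Fin r ⊕ Fin (m - r)) (Fin r ⊕ Fin (m - r)) ℝ) =
      Matrix.fromBlocks 1 0 0 1 from (Matrix.fromBlocks_one).symm] at hblocks
  have h11 : U₁ᵀ * U₁ = 1 := congrArg Matrix.toBlocks₁₁ hblocks
  have h12 : U₁ᵀ * U₂ = 0 := congrArg Matrix.toBlocks₁₂ hblocks
  have h21 : U₂ᵀ * U₁ = 0 := congrArg Matrix.toBlocks₂₁ hblocks
  have h22 : U₂ᵀ * U₂ = 1 := congrArg Matrix.toBlocks₂₂ hblocks
  -- the reverse product is also 1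
  have e : Fin m ≃ Fin r ⊕ Fin (m - r) :=
    (finCongr (by omega)).trans finSumFinEquiv.symm
  have hUU : U₁ * U₁ᵀ + U₂ * U₂ᵀ = 1 := by
    rw [← Matrix.fromCols_mul_fromRows]
    rw [← Matrix.transpose_fromCols]
    have := (Matrix.fromCols_mul_fromRows_eq_one_comm e U₁ U₂ U₁ᵀ U₂ᵀ).mpr
    rw [← Matrix.transpose_fromCols] at this
    apply this
    rw [Matrix.transpose_fromCols, Matrix.fromRows_mul_fromCols, hblocks]
    exact Matrix.fromBlocks_one
  rw [frr_iff_vecMul, frr_iff_vecMul]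
  constructor
  · intro h v hv
    rw [Matrix.vecMul_fromCols] at hv
    have hv1 : v ᵥ* U₁ = 0 := by
      have := congrFun hv; funext i; simpa using this (Sum.inl i)
    have hv2 : v ᵥ* M = 0 := by
      have := congrFun hv; funext i; simpa using this (Sum.inr i)
    have hw : (v ᵥ* U₂) ᵥ* (U₂ᵀ * M) = 0 := by
      rw [Matrix.vecMul_vecMul, ← Matrix.mul_assoc]
      have : U₂ * U₂ᵀ = 1 - U₁ * U₁ᵀ := by
        rw [← hUU]; abel
      rw [this, Matrix.sub_mul, Matrix.one_mul, Matrix.mul_assoc,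
        Matrix.vecMul_sub, hv2, ← Matrix.vecMul_vecMul, hv1]
      simp
    have hw0 : v ᵥ* U₂ = 0 := h _ hw
    -- now v annihilates U₁ and U₂, use hUU
    calc v = v ᵥ* (1 : Matrix (Fin m) (Fin m) ℝ) := by simp
      _ = v ᵥ* (U₁ * U₁ᵀ + U₂ * U₂ᵀ) := by rw [hUU]
      _ = 0 := by
          rw [Matrix.vecMul_add, ← Matrix.vecMul_vecMul, ← Matrix.vecMul_vecMul,
            hv1, hw0]
          simp
  · intro h w hw
    set v : Fin m → ℝ := w ᵥ* U₂ᵀ with hv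
    have hv1 : v ᵥ* U₁ = 0 := by
      rw [hv, Matrix.vecMul_vecMul, h21]; simp
    have hv2 : v ᵥ* M = 0 := by
      rw [hv, Matrix.vecMul_vecMul, hw]
    have hv0 : v = 0 := by
      apply h
      rw [Matrix.vecMul_fromCols, hv1, hv2]
      ext (i | i) <;> simp
    calc w = w ᵥ* (1 : Matrix (Fin (m - r)) (Fin (m - r)) ℝ) := by simp
      _ = (w ᵥ* U₂ᵀ) ᵥ* U₂ := by rw [Matrix.vecMul_vecMul, h22]
      _ = 0 := by rw [← hv, hv0]; simp
end
end

section
/- Let E be an m×n real matrix of rank r with SVD-partition U = [U₁ U₂], V = [V₁ V₂], S. Let A_xx (m×n), A_xv (m×v), A_zx (z×n), A_zv (z×v) and Φ (v×z) be real matrices such that I − A_zv·Φ is invertible. Define Ω = U₂ᵀ·(A_xx + A_xv·Φ·(I − A_zv·Φ)⁻¹·A_zx)·V₂ and the block matrix Π = [[U₂ᵀ·A_xx·V₂, U₂ᵀ·A_xv], [−Φ·A_zx·V₂, I − Φ·A_zv]]. Then Ω has full column rank if and only if Π has full column rank. -/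
open Matrix

noncomputable section

lemma fcr_iff_ker {m n : Type*} [Fintype m] [Fintype n] (A : Matrix m n ℝ) :
    FCR A ↔ ∀ x, A *ᵥ x = 0 → x = 0 := by
  have h := LinearMap.finrank_range_add_finrank_ker A.mulVecLin
  rw [Module.finrank_fintype_fun_eq_card] at h
  unfold FCR Matrix.rank
  constructor
  · intro hr x hx
    have hk : Module.finrank ℝ (LinearMap.ker A.mulVecLin) = 0 := by omega
    rw [Submodule.finrank_eq_zero] at hk
    have : x ∈ LinearMap.ker A.mulVecLin := by simpa [LinearMap.mem_ker] using hx
    simpa [hk] using this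
  · intro hx
    have hk : LinearMap.ker A.mulVecLin = ⊥ := by
      ext y; simp only [LinearMap.mem_ker, Submodule.mem_bot, mulVecLin_apply]
      exact ⟨hx y, fun h => by simp [h]⟩
    rw [hk] at h; simpa using h

/-- `Ω = U₂ᵀ·(A_xx + A_xv·Φ·(I − A_zv·Φ)⁻¹·A_zx)·V₂` has full column rank iff the
block matrix `Π = [[U₂ᵀ·A_xx·V₂, U₂ᵀ·A_xv], [−Φ·A_zx·V₂, I − Φ·A_zv]]` has full
column rank. -/
theorem omega_fcr_iff_pi_fcr (m n r v z : ℕ)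
    (E : Matrix (Fin m) (Fin n) ℝ)
    (U₁ : Matrix (Fin m) (Fin r) ℝ) (U₂ : Matrix (Fin m) (Fin (m - r)) ℝ)
    (V₁ : Matrix (Fin n) (Fin r) ℝ) (V₂ : Matrix (Fin n) (Fin (n - r)) ℝ)
    (S : Matrix (Fin r) (Fin r) ℝ)
    (hsvd : IsSVDPartition E U₁ U₂ V₁ V₂ S)
    (Axx : Matrix (Fin m) (Fin n) ℝ) (Axv : Matrix (Fin m) (Fin v) ℝ)
    (Azx : Matrix (Fin z) (Fin n) ℝ) (Azv : Matrix (Fin z) (Fin v) ℝ)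
    (Φ : Matrix (Fin v) (Fin z) ℝ) (hinv : IsUnit (1 - Azv * Φ)) :
    FCR (U₂ᵀ * (Axx + Axv * Φ * (1 - Azv * Φ)⁻¹ * Azx) * V₂) ↔
      FCR (Matrix.fromBlocks (U₂ᵀ * Axx * V₂) (U₂ᵀ * Axv)
        (-(Φ * Azx * V₂)) (1 - Φ * Azv)) := by
  set G := (1 - Azv * Φ)⁻¹ with hGdef
  set F := (1 - Φ * Azv) with hFdef
  set B := U₂ᵀ * Axx * V₂ with hBdef
  set C := U₂ᵀ * Axv with hCdef
  set M := Φ * Azx * V₂ with hMdef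
  have hdetG : IsUnit (1 - Azv * Φ).det := (Matrix.isUnit_iff_isUnit_det _).1 hinv
  have hdetF : IsUnit F.det := by
    rw [hFdef, ← Matrix.det_one_sub_mul_comm]; exact hdetG
  have hGinv : (1 - Azv * Φ) * G = 1 := Matrix.mul_nonsing_inv _ hdetG
  have hFinv : F⁻¹ * F = 1 := Matrix.nonsing_inv_mul _ hdetF
  have hFinv' : F * F⁻¹ = 1 := Matrix.mul_nonsing_inv _ hdetF
  have hswap : Φ * G = F⁻¹ * Φ := by
    have h1 : F * Φ = Φ * (1 - Azv * Φ) := by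
      rw [hFdef, Matrix.sub_mul, Matrix.mul_sub, Matrix.one_mul, Matrix.mul_one,
        Matrix.mul_assoc]
    calc Φ * G = (F⁻¹ * F) * (Φ * G) := by rw [hFinv, Matrix.one_mul]
      _ = F⁻¹ * (F * Φ * G) := by rw [Matrix.mul_assoc, Matrix.mul_assoc]
      _ = F⁻¹ * (Φ * ((1 - Azv * Φ) * G)) := by
          rw [h1, Matrix.mul_assoc]
      _ = F⁻¹ * Φ := by rw [hGinv, Matrix.mul_one]
  have key : Axv * Φ * G = Axv * F⁻¹ * Φ := by
    rw [Matrix.mul_assoc, hswap, ← Matrix.mul_assoc]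
  have hΩ : U₂ᵀ * (Axx + Axv * Φ * G * Azx) * V₂ = B + C * F⁻¹ * M := by
    rw [hBdef, hCdef, hMdef, key]
    simp only [Matrix.mul_add, Matrix.add_mul, Matrix.mul_assoc]
  clear hGdef hBdef hCdef hMdef hFdef hdetG hdetF hGinv hswap key hinv
  clear_value G F B C M
  rw [hΩ, fcr_iff_ker, fcr_iff_ker]
  constructor
  · intro h u hu
    rw [fromBlocks_mulVec] at hu
    have h1 : B *ᵥ (u ∘ Sum.inl) + C *ᵥ (u ∘ Sum.inr) = 0 :=
      funext fun i => congrFun hu (Sum.inl i)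
    have h2 : (-M) *ᵥ (u ∘ Sum.inl) + F *ᵥ (u ∘ Sum.inr) = 0 :=
      funext fun i => congrFun hu (Sum.inr i)
    have hFy : F *ᵥ (u ∘ Sum.inr) = M *ᵥ (u ∘ Sum.inl) := by
      rw [Matrix.neg_mulVec, neg_add_eq_zero] at h2; exact h2.symm
    have hy : u ∘ Sum.inr = F⁻¹ *ᵥ (M *ᵥ (u ∘ Sum.inl)) := by
      rw [← hFy, Matrix.mulVec_mulVec, hFinv, Matrix.one_mulVec]
    have hx0 : u ∘ Sum.inl = 0 := by
      apply h
      rw [Matrix.add_mulVec, ← Matrix.mulVec_mulVec, ← Matrix.mulVec_mulVec, ← hy]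
      exact h1
    have hy0 : u ∘ Sum.inr = 0 := by
      rw [hy, hx0]; simp
    funext i
    cases i with
    | inl i => exact congrFun hx0 i
    | inr i => exact congrFun hy0 i
  · intro h x hx
    have hu := h (Sum.elim x (F⁻¹ *ᵥ (M *ᵥ x))) ?_
    · exact funext fun i => congrFun hu (Sum.inl i)
    · rw [fromBlocks_mulVec]
      have e1 : Sum.elim x (F⁻¹ *ᵥ (M *ᵥ x)) ∘ Sum.inl = x := rfl
      have e2 : Sum.elim x (F⁻¹ *ᵥ (M *ᵥ x)) ∘ Sum.inr = F⁻¹ *ᵥ (M *ᵥ x) := rfl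
      rw [e1, e2]
      have hB : B *ᵥ x + C *ᵥ (F⁻¹ *ᵥ (M *ᵥ x)) = 0 := by
        rw [Matrix.mulVec_mulVec, Matrix.mulVec_mulVec, ← Matrix.add_mulVec]
        exact hx
      have hD : (-M) *ᵥ x + F *ᵥ (F⁻¹ *ᵥ (M *ᵥ x)) = 0 := by
        rw [Matrix.mulVec_mulVec, Matrix.mulVec_mulVec, hFinv',
          Matrix.one_mul, Matrix.neg_mulVec, neg_add_cancel]
      rw [hB, hD]
      funext i; cases i <;> rfl
end
end
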